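/- Under the paper's hypotheses, the irreducible cyclic code C = {c(a) : a ∈ F_{q^r}} with b = r is an MDS r-symbol code: |C| = q^r, its minimum r-symbol distance is d_r(C) = n, and q^r = q^{n - d_r(C) + r}. -/

import Mathlib

/-- The `b`-symbol map `π_b`; indices are cyclic (mod `n`). -/
def pib {F : Type*} [Field F] {n : ℕ} (b : ℕ) (x : ZMod n → F) :
    ZMod n → (Fin b → F) :=
  fun i j => x (i + ((j : ℕ) : ZMod n))

/-- The `b`-symbol Hamming weight `w_b(x)`. -/
noncomputable def wb {F : Type*} [Field F] {n : ℕ} (b : ℕ) (x : ZMod n → F) : ℕ :=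
  Nat.card {i : ZMod n // pib b x i ≠ 0}

set_option maxHeartbeats 1000000 in
set_option synthInstance.maxHeartbeats 400000 in
/-- The irreducible cyclic code `C = {c(a)}` is an MDS `r`-symbol code:
`|C| = q^r`, its minimum `r`-symbol distance is `n`, and the Singleton-type bound
`M ≤ q^{n - d_r + r}` is attained with equality. -/
theorem C_is_MDS_r_symbol (q r N n : ℕ) (hq : IsPrimePow q) (hodd : Odd q)
    (hr : 2 ≤ r) (hre : Even r) (hN : 0 < N) [NeZero n]
    (hnN : n * N = q ^ r - 1)
    (hgcd : Nat.gcd ((q ^ r - 1) / (q - 1)) N = 2)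
    (F : Type*) [Field F] [Fintype F] (hF : Fintype.card F = q ^ r)
    (K : Subfield F) (hK : Nat.card K = q)
    (η : Fˣ) (hη : ∀ x : Fˣ, x ∈ Subgroup.zpowers η) :
    Nat.card (Set.range (fun a : F => fun j : ZMod n =>
        Algebra.trace ↥K F (a * (η : F) ^ (N * j.val)))) = q ^ r ∧
    sInf {m : ℕ | ∃ a : F, a ≠ 0 ∧
        wb r (fun j : ZMod n => Algebra.trace ↥K F (a * (η : F) ^ (N * j.val))) = m} = n ∧
    q ^ r = q ^ (n - n + r) := by
  classical
  have hq2 : 2 ≤ q := hq.two_le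
  have hq3 : 3 ≤ q := by
    rcases hodd with ⟨k, hk⟩; omega
  have hr0 : 0 < r := by omega
  have hn0 : 0 < n := Nat.pos_of_ne_zero (NeZero.ne n)
  have hqr1 : 1 ≤ q ^ r := Nat.one_le_pow _ _ (by omega)
  letI : Fintype ↥K := Fintype.ofFinite _
  have hKcard : Fintype.card ↥K = q := by rw [← Nat.card_eq_fintype_card]; exact hK
  have hfr : Module.finrank ↥K F = r := by
    have h := Module.card_eq_pow_finrank (K := ↥K) (V := F)
    rw [hKcard, hF] at h
    exact (Nat.pow_right_injective hq2 h.symm)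
  -- the order of η
  have hηord : orderOf η = n * N := by
    rw [orderOf_eq_card_of_forall_mem_zpowers hη, Nat.card_units, Nat.card_eq_fintype_card, hF]; omega
  set θ : F := (η : F) ^ N with hθ
  have hθu : θ = ((η ^ N : Fˣ) : F) := (Units.val_pow_eq_pow_val η N).symm
  have hθne : θ ≠ 0 := hθu ▸ Units.ne_zero _
  have hθordu : orderOf (η ^ N) = n := by
    rw [orderOf_pow, hηord, Nat.gcd_eq_right (dvd_mul_left N n), Nat.mul_div_cancel _ hN]
  have hθord : orderOf θ = n := by rw [hθu, orderOf_units, hθordu]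
  have hθn : θ ^ n = 1 := by rw [← hθord]; exact pow_orderOf_eq_one θ
  have hmod : ∀ m : ℕ, θ ^ (m % n) = θ ^ m := by
    intro m
    conv_rhs => rw [← Nat.div_add_mod m n]
    rw [pow_add, pow_mul, hθn, one_pow, one_mul]
  -- minimal polynomial degree of θ over K
  have hint : IsIntegral ↥K θ := IsIntegral.of_finite _ _
  set s := (minpoly ↥K θ).natDegree with hs
  have hs0 : 0 < s := minpoly.natDegree_pos hint
  set E := IntermediateField.adjoin ↥K {θ} with hE
  have hsfin : Module.finrank ↥K ↥E = s := IntermediateField.adjoin.finrank hint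
  have hsr : s ∣ r := by
    refine ⟨Module.finrank ↥E F, ?_⟩
    rw [← hfr, ← hsfin, Module.finrank_mul_finrank]
  letI : Fintype ↥E := Fintype.ofFinite _
  have hcards : Fintype.card ↥E = q ^ s := by
    rw [Module.card_eq_pow_finrank (K := ↥K) (V := ↥E), hKcard, hsfin]
  have hmem : θ ∈ E := IntermediateField.subset_adjoin ↥K {θ} (Set.mem_singleton θ)
  have hθqs : θ ^ (q ^ s - 1) = 1 := by
    have h2 := FiniteField.pow_card_sub_one_eq_one (⟨θ, hmem⟩ : ↥E)
      (by intro h0; exact hθne (by simpa [Subtype.ext_iff] using h0))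
    rw [hcards] at h2
    have h3 := congrArg Subtype.val h2
    simpa using h3
  have hndvd : n ∣ q ^ s - 1 := by
    rw [← hθord]; exact orderOf_dvd_of_pow_eq_one hθqs
  -- number theory: s = r
  have hsreq : s = r := by
    by_contra hne
    have hslt : s < r := lt_of_le_of_ne (Nat.le_of_dvd hr0 hsr) hne
    have h2s : 2 * s ≤ r := by
      obtain ⟨c, hc⟩ := hsr
      rcases c with _ | _ | c
      · omega
      · omega
      · nlinarith
    have hqs3 : 3 ≤ q ^ s := le_trans hq3 (Nat.le_self_pow (by omega) q)
    have hA : q ^ s - 1 ∣ q ^ r - 1 := by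
      have h := Nat.sub_dvd_pow_sub_pow (q ^ s) 1 (r / s)
      rwa [one_pow, ← pow_mul, Nat.mul_div_cancel' hsr] at h
    obtain ⟨A, hAeq⟩ := hA
    obtain ⟨t, ht⟩ := hndvd
    have hNeq : N = t * A := by
      have h1 : n * N = n * (t * A) := by rw [hnN, hAeq, ht, mul_assoc]
      exact Nat.eq_of_mul_eq_mul_left hn0 h1
    have hq1dvd : q - 1 ∣ q ^ s - 1 := by
      have h := Nat.sub_dvd_pow_sub_pow q 1 s; rwa [one_pow] at h
    obtain ⟨u, hu⟩ := hq1dvd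
    have hq1dvdr : q - 1 ∣ q ^ r - 1 := by
      have h := Nat.sub_dvd_pow_sub_pow q 1 r; rwa [one_pow] at h
    have hSeq : (q ^ r - 1) / (q - 1) = u * A := by
      have h1 : (q - 1) * ((q ^ r - 1) / (q - 1)) = (q - 1) * (u * A) := by
        rw [Nat.mul_div_cancel' hq1dvdr, hAeq, hu, mul_assoc]
      exact Nat.eq_of_mul_eq_mul_left (by omega) h1
    have hA2 : A ∣ 2 := by
      rw [← hgcd]
      exact Nat.dvd_gcd ⟨u, by rw [hSeq, mul_comm]⟩ ⟨t, by rw [hNeq, mul_comm]⟩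
    have hAle : A ≤ 2 := Nat.le_of_dvd (by omega) hA2
    have hbig : q ^ s * q ^ s ≤ q ^ r := by
      calc q ^ s * q ^ s = q ^ (2 * s) := by rw [two_mul, pow_add]
        _ ≤ q ^ r := Nat.pow_le_pow_right (by omega) h2s
    have key : q ^ r - 1 ≤ (q ^ s - 1) * 2 := by
      rw [hAeq]; exact Nat.mul_le_mul_left _ hAle
    have key2 : 3 * q ^ s ≤ q ^ s * q ^ s := Nat.mul_le_mul_right _ hqs3
    have key3 : 3 * q ^ s ≤ q ^ r := le_trans key2 hbig
    omega
  -- the powers of θ form a basis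
  haveI : Nonempty (Fin s) := ⟨⟨0, hs0⟩⟩
  have li : LinearIndependent ↥K fun i : Fin s => θ ^ (i : ℕ) := linearIndependent_pow θ
  let B := basisOfLinearIndependentOfCardEqFinrank li
    (by rw [Fintype.card_fin, hsreq, hfr])
  have hB : ∀ i : Fin s, B i = θ ^ (i : ℕ) := fun i => by
    rw [coe_basisOfLinearIndependentOfCardEqFinrank]
  -- nondegeneracy of the trace form
  have core : ∀ b : F, (∀ j : ℕ, j < r → Algebra.trace ↥K F (b * θ ^ j) = 0) → b = 0 := by
    intro b hb
    have hφ : (Algebra.traceForm ↥K F) b = 0 := B.ext fun i => by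
      rw [hB i]
      have : (i : ℕ) < r := by rw [← hsreq]; exact i.isLt
      simpa [Algebra.traceForm_apply] using hb i this
    exact (traceForm_nondegenerate (K := ↥K) (L := F)).1 b fun x => by rw [hφ]; rfl
  -- every window of a nonzero codeword is nonzero
  have hwin : ∀ a : F, a ≠ 0 → ∀ i : ZMod n,
      pib r (fun j : ZMod n => Algebra.trace ↥K F (a * (η : F) ^ (N * j.val))) i ≠ 0 := by
    intro a ha i hzero
    have hji : ∀ j : ℕ, j < r → Algebra.trace ↥K F (a * θ ^ i.val * θ ^ j) = 0 := by
      intro j hj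
      have h1 := congrFun hzero ⟨j, hj⟩
      simp only [pib, Pi.zero_apply] at h1
      have e : (η : F) ^ (N * (i + ((j : ℕ) : ZMod n)).val) = θ ^ i.val * θ ^ j := by
        rw [pow_mul, ← hθ, ZMod.val_add, ZMod.val_natCast]
        rw [Nat.add_mod_mod, hmod, pow_add]
      rw [e, ← mul_assoc] at h1
      exact h1
    have h0 : a * θ ^ i.val = 0 := core _ hji
    rcases mul_eq_zero.mp h0 with h | h
    · exact ha h
    · exact pow_ne_zero _ hθne h
  -- injectivity
  have hinj : Function.Injective (fun a : F => fun j : ZMod n =>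
      Algebra.trace ↥K F (a * (η : F) ^ (N * j.val))) := by
    intro a a' h
    have hj : ∀ j : ℕ, j < r → Algebra.trace ↥K F ((a - a') * θ ^ j) = 0 := by
      intro j hjr
      have h1 := congrFun h ((j : ℕ) : ZMod n)
      simp only at h1
      have e : (η : F) ^ (N * ((j : ℕ) : ZMod n).val) = θ ^ j := by
        rw [ZMod.val_natCast, pow_mul, ← hθ, hmod]
      rw [e] at h1
      rw [sub_mul, map_sub, h1, sub_self]
    have := core _ hj
    exact sub_eq_zero.mp this
  -- weight of a nonzero codeword is n
  have hwb : ∀ a : F, a ≠ 0 →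
      wb r (fun j : ZMod n => Algebra.trace ↥K F (a * (η : F) ^ (N * j.val))) = n := by
    intro a ha
    unfold wb
    rw [Nat.card_congr (Equiv.subtypeUnivEquiv (hwin a ha)), Nat.card_zmod]
  refine ⟨?_, ?_, by rw [Nat.sub_self, Nat.zero_add]⟩
  · rw [Nat.card_range_of_injective hinj, Nat.card_eq_fintype_card, hF]
  · have hset : {m : ℕ | ∃ a : F, a ≠ 0 ∧
        wb r (fun j : ZMod n => Algebra.trace ↥K F (a * (η : F) ^ (N * j.val))) = m} = {n} := by
      ext m
      simp only [Set.mem_setOf_eq, Set.mem_singleton_iff]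
      constructor
      · rintro ⟨a, ha, rfl⟩
        exact hwb a ha
      · rintro rfl
        exact ⟨1, one_ne_zero, hwb 1 one_ne_zero⟩
    rw [hset, csInf_singleton]
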